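/- Let p be a prime and let (B_j)_{j∈ℕ}, B_j = B(a_j, p^{−n_j}), be a sequence of pairwise disjoint closed balls in ℚ_p with ∑_j p^{−n_j} < ∞, with metric boundary β = ⋃_j S(a_j, p^{−n_j}) and thick inner ε-neighborhoods N_ε. Then μ_H(β) = (1 − p^{−1}) · ∑_j p^{−n_j}, and μ_H(N_ε) tends to (1 − p^{−1}) · ∑_j p^{−n_j} as ε → 0⁺. -/

import Mathlib

open MeasureTheory
open scoped ENNReal

noncomputable instance padicMeasurableSpace (p : ℕ) [Fact p.Prime] : MeasurableSpace ℚ_[p] :=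
  borel _

instance padicBorelSpace (p : ℕ) [Fact p.Prime] : BorelSpace ℚ_[p] := ⟨rfl⟩

/-- The closed unit ball `ℤ_p = {x : ℚ_p | |x|_p ≤ 1}` of `ℚ_p`, as a positive compact set. -/
noncomputable def padicUnitBall (p : ℕ) [Fact p.Prime] :
    TopologicalSpace.PositiveCompacts ℚ_[p] where
  carrier := Metric.closedBall 0 1
  isCompact' := isCompact_closedBall 0 1
  interior_nonempty' :=
    ⟨0, mem_interior_iff_mem_nhds.mpr (Metric.closedBall_mem_nhds 0 one_pos)⟩

/-- The Haar measure `μ_H` on the additive group `ℚ_p`, normalized so that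
`μ_H(ℤ_p) = 1`. -/
noncomputable def padicHaar (p : ℕ) [Fact p.Prime] : Measure ℚ_[p] :=
  Measure.addHaarMeasure (padicUnitBall p)

variable (p : ℕ) [hp : Fact p.Prime]

instance : (padicHaar p).IsAddHaarMeasure := by
  unfold padicHaar; infer_instance

example : (padicHaar p).IsAddLeftInvariant := inferInstance

lemma haar_unit : padicHaar p (Metric.closedBall (0:ℚ_[p]) 1) = 1 :=
  Measure.addHaarMeasure_self (K₀ := padicUnitBall p)

lemma haar_translate (c : ℚ_[p]) (r : ℝ) :
    padicHaar p (Metric.closedBall c r) = padicHaar p (Metric.closedBall 0 r) := by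
  have : Metric.closedBall c r = (fun x => -c + x) ⁻¹' (Metric.closedBall 0 r) := by
    ext x
    simp [Metric.mem_closedBall, dist_eq_norm, neg_add_eq_sub]
  rw [this, measure_preimage_add]

lemma padic_coset_disj (n : ℤ) {i j : ℕ} (hi : i < p) (hj : j < p) (hij : i ≠ j) :
    Disjoint (Metric.closedBall ((i:ℚ_[p]) * (p:ℚ_[p])^n) ((p:ℝ)^(-(n+1))))
      (Metric.closedBall ((j:ℚ_[p]) * (p:ℚ_[p])^n) ((p:ℝ)^(-(n+1)))) := by
  have hppos : (0:ℝ) < (p:ℝ) := by exact_mod_cast hp.1.pos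
  rw [Set.disjoint_left]
  intro x hxi hxj
  simp only [Metric.mem_closedBall, dist_eq_norm] at hxi hxj
  -- the distance between the centers is p^(-n)
  have hd : ‖(i:ℚ_[p]) * (p:ℚ_[p])^n - (j:ℚ_[p]) * (p:ℚ_[p])^n‖ = (p:ℝ)^(-n) := by
    have h1 : (i:ℚ_[p]) * (p:ℚ_[p])^n - (j:ℚ_[p]) * (p:ℚ_[p])^n
        = (((i:ℤ) - (j:ℤ) : ℤ) : ℚ_[p]) * (p:ℚ_[p])^n := by push_cast; ring
    have hnd : ¬ ((p:ℤ) ∣ ((i:ℤ) - (j:ℤ))) := by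
      intro hdvd
      have h0 : ((i:ℤ) - (j:ℤ)) ≠ 0 := by
        intro h; apply hij; omega
      have h2 := Int.le_of_dvd (abs_pos.2 h0) ((dvd_abs _ _).2 hdvd)
      have h3 : |(i:ℤ) - (j:ℤ)| < p := abs_sub_lt_iff.2 (by omega)
      omega
    have hnorm1 : ‖(((i:ℤ) - (j:ℤ) : ℤ) : ℚ_[p])‖ = 1 := by
      have hle := Padic.norm_int_le_one (p := p) ((i:ℤ) - (j:ℤ))
      have hlt := (Padic.norm_intCast_lt_one_iff (p := p) (k := (i:ℤ) - (j:ℤ))).not.2 hnd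
      push_neg at hlt
      linarith
    rw [h1, norm_mul, hnorm1, Padic.norm_p_zpow, one_mul]
  have hlt : (p:ℝ)^(-(n+1)) < (p:ℝ)^(-n) :=
    zpow_lt_zpow_right₀ (by exact_mod_cast hp.1.one_lt) (by omega)
  have : ‖(i:ℚ_[p]) * (p:ℚ_[p])^n - (j:ℚ_[p]) * (p:ℚ_[p])^n‖ ≤ (p:ℝ)^(-(n+1)) := by
    have heq : (i:ℚ_[p]) * (p:ℚ_[p])^n - (j:ℚ_[p]) * (p:ℚ_[p])^n
        = ((i:ℚ_[p]) * (p:ℚ_[p])^n - x) + (x - (j:ℚ_[p]) * (p:ℚ_[p])^n) := by ring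
    rw [heq]
    refine le_trans (Padic.nonarchimedean _ _) (max_le ?_ hxj)
    rwa [norm_sub_rev]
  rw [hd] at this
  linarith
variable (p : ℕ) [hp : Fact p.Prime]

lemma padic_cover (n : ℤ) :
    Metric.closedBall (0:ℚ_[p]) ((p:ℝ)^(-n)) =
      ⋃ i ∈ Finset.range p, Metric.closedBall ((i:ℚ_[p]) * (p:ℚ_[p])^n) ((p:ℝ)^(-(n+1))) := by
  have hpne : ((p:ℚ_[p]))^n ≠ 0 := zpow_ne_zero _ (by exact_mod_cast hp.1.ne_zero)
  ext x
  simp only [Metric.mem_closedBall, dist_eq_norm, sub_zero, Set.mem_iUnion, Finset.mem_range,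
    exists_prop]
  constructor
  · intro hx
    set y : ℚ_[p] := x * ((p:ℚ_[p])^n)⁻¹ with hy
    have hynorm : ‖y‖ ≤ 1 := by
      have hppos : (0:ℝ) < (p:ℝ) := by exact_mod_cast hp.1.pos
      have hpos : (0:ℝ) < (p:ℝ)^(-n) := zpow_pos hppos _
      rw [hy, norm_mul, norm_inv, Padic.norm_p_zpow]
      calc ‖x‖ * ((p:ℝ)^(-n))⁻¹ ≤ (p:ℝ)^(-n) * ((p:ℝ)^(-n))⁻¹ := by gcongr
        _ = 1 := mul_inv_cancel₀ hpos.ne'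
    set z : ℤ_[p] := ⟨y, hynorm⟩ with hz
    refine ⟨z.appr 1, by simpa using z.appr_lt 1, ?_⟩
    have hspec := (PadicInt.norm_le_pow_iff_mem_span_pow (z - (z.appr 1 : ℤ_[p])) 1).2
      (z.appr_spec 1)
    have hcoe : ‖y - (z.appr 1 : ℚ_[p])‖ ≤ (p:ℝ)^(-(1:ℤ)) := by
      have : ((z - (z.appr 1 : ℤ_[p]) : ℤ_[p]) : ℚ_[p]) = y - (z.appr 1 : ℚ_[p]) := by
        rw [PadicInt.coe_sub]
        push_cast [hz]
        ring
      rw [← this]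
      exact_mod_cast hspec
    have hxy : x = y * (p:ℚ_[p])^n := by
      rw [hy]; field_simp
    calc ‖x - (z.appr 1 : ℚ_[p]) * (p:ℚ_[p])^n‖
        = ‖(y - (z.appr 1 : ℚ_[p])) * (p:ℚ_[p])^n‖ := by rw [hxy]; ring_nf
      _ = ‖y - (z.appr 1 : ℚ_[p])‖ * (p:ℝ)^(-n) := by
          rw [norm_mul, Padic.norm_p_zpow]
      _ ≤ (p:ℝ)^(-(1:ℤ)) * (p:ℝ)^(-n) :=
          mul_le_mul_of_nonneg_right hcoe (by positivity)
      _ = (p:ℝ)^(-(n+1)) := by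
          rw [← zpow_add₀ (by exact_mod_cast hp.1.pos.ne' : (p:ℝ) ≠ 0)]
          ring_nf
  · rintro ⟨i, hip, hxi⟩
    have h1 : ‖(i:ℚ_[p]) * (p:ℚ_[p])^n‖ ≤ (p:ℝ)^(-n) := by
      rw [norm_mul, Padic.norm_p_zpow]
      have : ‖(i:ℚ_[p])‖ ≤ 1 := by
        have := Padic.norm_int_le_one (p := p) (i : ℤ)
        simpa using this
      nlinarith [zpow_pos (by exact_mod_cast hp.1.pos : (0:ℝ) < p) (-n)]
    have h2 : (p:ℝ)^(-(n+1)) ≤ (p:ℝ)^(-n) := by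
      apply zpow_le_zpow_right₀ (by exact_mod_cast hp.1.one_le) (by omega)
    calc ‖x‖ = ‖(x - (i:ℚ_[p]) * (p:ℚ_[p])^n) + (i:ℚ_[p]) * (p:ℚ_[p])^n‖ := by ring_nf
      _ ≤ max ‖x - (i:ℚ_[p]) * (p:ℚ_[p])^n‖ ‖(i:ℚ_[p]) * (p:ℚ_[p])^n‖ :=
          Padic.nonarchimedean _ _
      _ ≤ (p:ℝ)^(-n) := max_le (le_trans hxi h2) h1

lemma haar_ball_step (n : ℤ) :
    padicHaar p (Metric.closedBall (0:ℚ_[p]) ((p:ℝ)^(-n)))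
      = p * padicHaar p (Metric.closedBall (0:ℚ_[p]) ((p:ℝ)^(-(n+1)))) := by
  rw [padic_cover p n, measure_biUnion_finset ?hd (fun i _ => measurableSet_closedBall)]
  · simp only [haar_translate]
    rw [Finset.sum_const, Finset.card_range, nsmul_eq_mul]
  case hd =>
    intro i hi j hj hij
    exact padic_coset_disj p n (Finset.mem_range.1 hi) (Finset.mem_range.1 hj) hij

lemma haar_ball_zero (n : ℤ) :
    padicHaar p (Metric.closedBall (0:ℚ_[p]) ((p:ℝ)^(-n))) = (p:ℝ≥0∞)^(-n) := by
  have hp0 : (p:ℝ≥0∞) ≠ 0 := by exact_mod_cast Nat.cast_ne_zero.2 hp.1.ne_zero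
  have hpt : (p:ℝ≥0∞) ≠ ⊤ := ENNReal.natCast_ne_top p
  induction n using Int.induction_on with
  | zero => simpa using haar_unit p
  | succ k ih =>
      have hstep := haar_ball_step p k
      rw [ih] at hstep
      have h2 : padicHaar p (Metric.closedBall (0:ℚ_[p]) ((p:ℝ)^(-((k:ℤ)+1))))
          = (p:ℝ≥0∞)^(-(k:ℤ)) / p := by
        rw [ENNReal.eq_div_iff hp0 hpt, ← hstep]
      rw [h2, show (-((k:ℤ)+1)) = (-(k:ℤ)) + (-1) by ring, ENNReal.zpow_add hp0 hpt,
        zpow_neg_one, div_eq_mul_inv]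
  | pred k ih =>
      rw [show (-(k:ℤ)-1) = -((k:ℤ)+1) by ring]
      have hstep := haar_ball_step p (-((k:ℤ)+1))
      rw [show (-((k:ℤ)+1) + 1) = -(k:ℤ) by ring, ih] at hstep
      rw [hstep, show (-(-((k:ℤ)+1))) = 1 + (-(-(k:ℤ))) by ring, ENNReal.zpow_add hp0 hpt,
        zpow_one]

lemma haar_ball (c : ℚ_[p]) (n : ℤ) :
    padicHaar p (Metric.closedBall c ((p:ℝ)^(-n))) = (p:ℝ≥0∞)^(-n) := by
  rw [haar_translate, haar_ball_zero]

lemma padic_sphere_eq (c : ℚ_[p]) (n : ℤ) :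
    Metric.sphere c ((p:ℝ)^(-n)) =
      Metric.closedBall c ((p:ℝ)^(-n)) \ Metric.closedBall c ((p:ℝ)^(-(n+1))) := by
  have key : ∀ v : ℚ_[p], (‖v‖ < (p:ℝ)^(-n) ↔ ‖v‖ ≤ (p:ℝ)^(-(n+1))) := by
    intro v
    rw [Padic.norm_lt_pow_iff_norm_le_pow_sub_one, show (-n-1 : ℤ) = -(n+1) by ring]
  ext x
  simp only [Metric.mem_sphere, Metric.mem_closedBall, Set.mem_diff, dist_eq_norm]
  constructor
  · intro h
    refine ⟨h.le, fun hc => ?_⟩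
    rw [← key] at hc
    exact absurd h hc.ne
  · rintro ⟨hle, hnot⟩
    rw [← key] at hnot
    exact le_antisymm hle (not_lt.1 hnot)

lemma haar_sphere (c : ℚ_[p]) (n : ℤ) :
    padicHaar p (Metric.sphere c ((p:ℝ)^(-n)))
      = (p:ℝ≥0∞)^(-n) - (p:ℝ≥0∞)^(-(n+1)) := by
  have hp0 : (p:ℝ≥0∞) ≠ 0 := by exact_mod_cast Nat.cast_ne_zero.2 hp.1.ne_zero
  have hpt : (p:ℝ≥0∞) ≠ ⊤ := ENNReal.natCast_ne_top p
  have hsub : Metric.closedBall c ((p:ℝ)^(-(n+1))) ⊆ Metric.closedBall c ((p:ℝ)^(-n)) :=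
    Metric.closedBall_subset_closedBall
      (zpow_le_zpow_right₀ (by exact_mod_cast hp.1.one_le) (by omega))
  rw [padic_sphere_eq, measure_diff hsub measurableSet_closedBall.nullMeasurableSet
    (by rw [haar_ball]; exact (ENNReal.zpow_lt_top hp0 hpt _).ne), haar_ball, haar_ball]

lemma ofReal_p_zpow (m : ℤ) : ENNReal.ofReal ((p:ℝ)^m) = (p:ℝ≥0∞)^m := by
  have hppos : (0:ℝ) < p := by exact_mod_cast hp.1.pos
  have hp0 : (p:ℝ≥0∞) ≠ 0 := by exact_mod_cast Nat.cast_ne_zero.2 hp.1.ne_zero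
  have hpt : (p:ℝ≥0∞) ≠ ⊤ := ENNReal.natCast_ne_top p
  induction m using Int.induction_on with
  | zero => simp
  | succ k ih =>
      rw [zpow_add₀ hppos.ne' _ 1, ENNReal.zpow_add hp0 hpt, ← ih,
        ENNReal.ofReal_mul (by positivity), zpow_one, zpow_one, ENNReal.ofReal_natCast]
  | pred k ih =>
      rw [show (-(k:ℤ)-1) = (-(k:ℤ)) + (-1) by ring, zpow_add₀ hppos.ne',
        ENNReal.zpow_add hp0 hpt, ← ih, ENNReal.ofReal_mul (by positivity), zpow_neg_one,
        zpow_neg_one, ENNReal.ofReal_inv_of_pos hppos, ENNReal.ofReal_natCast]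

lemma one_sub_inv_nonneg : (0:ℝ) ≤ 1 - (p:ℝ)⁻¹ := by
  rw [sub_nonneg]
  exact inv_le_one_of_one_le₀ (by exact_mod_cast hp.1.one_le)

lemma haar_beta (a : ℕ → ℚ_[p]) (n : ℕ → ℤ)
    (hdisj : Pairwise fun i j =>
      Disjoint (Metric.closedBall (a i) ((p : ℝ) ^ (-n i)))
        (Metric.closedBall (a j) ((p : ℝ) ^ (-n j))))
    (hsum : Summable fun j => (p : ℝ) ^ (-n j)) :
    padicHaar p (⋃ j, Metric.sphere (a j) ((p : ℝ) ^ (-n j)))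
      = ENNReal.ofReal ((1 - (p : ℝ)⁻¹) * ∑' j, (p : ℝ) ^ (-n j)) := by
  have hppos : (0:ℝ) < p := by exact_mod_cast hp.1.pos
  have hsp : Pairwise (Function.onFun Disjoint fun j => Metric.sphere (a j) ((p:ℝ)^(-n j))) :=
    fun i j hij => (hdisj hij).mono Metric.sphere_subset_closedBall
      Metric.sphere_subset_closedBall
  rw [measure_iUnion hsp (fun j => Metric.isClosed_sphere.measurableSet)]
  have hterm : ∀ j, padicHaar p (Metric.sphere (a j) ((p:ℝ)^(-n j)))
      = ENNReal.ofReal ((1 - (p:ℝ)⁻¹) * (p:ℝ)^(-n j)) := by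
    intro j
    rw [haar_sphere]
    have hr : (1 - (p:ℝ)⁻¹) * (p:ℝ)^(-n j) = (p:ℝ)^(-n j) - (p:ℝ)^(-(n j + 1)) := by
      rw [show (-(n j + 1):ℤ) = (-n j) + (-1) by ring, zpow_add₀ hppos.ne', zpow_neg_one,
        sub_mul, one_mul, mul_comm]
    rw [hr, ENNReal.ofReal_sub _ (by positivity), ofReal_p_zpow, ofReal_p_zpow]
  simp only [hterm]
  rw [← ENNReal.ofReal_tsum_of_nonneg
    (fun j => mul_nonneg (one_sub_inv_nonneg p) (by positivity)) (hsum.mul_left _),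
    tsum_mul_left]

lemma padic_sphere_witness (c : ℚ_[p]) (m : ℤ) :
    c + (p:ℚ_[p])^m ∈ Metric.sphere c ((p:ℝ)^(-m)) := by
  simp only [Metric.mem_sphere, dist_eq_norm, add_sub_cancel_left, Padic.norm_p_zpow]

variable {a : ℕ → ℚ_[p]} {n : ℕ → ℤ}

lemma padic_inner_lt (j : ℕ) : (p:ℝ)^(-(n j + 1)) < (p:ℝ)^(-(n j)) :=
  zpow_lt_zpow_right₀ (by exact_mod_cast hp.1.one_lt) (by omega)

/-- lower bound: points of the open ball are at distance `≥ r j` from every sphere point -/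
lemma padic_infDist_lower
    (hdisj : Pairwise fun i j =>
      Disjoint (Metric.closedBall (a i) ((p : ℝ) ^ (-n i)))
        (Metric.closedBall (a j) ((p : ℝ) ^ (-n j))))
    {j : ℕ} {x : ℚ_[p]} (hx : dist x (a j) ≤ (p:ℝ)^(-(n j + 1)))
    {y : ℚ_[p]} (hy : y ∈ ⋃ k, Metric.sphere (a k) ((p : ℝ) ^ (-n k))) :
    (p:ℝ)^(-(n j)) ≤ dist x y := by
  obtain ⟨k, hk⟩ := Set.mem_iUnion.1 hy
  rw [Metric.mem_sphere] at hk
  rw [dist_eq_norm] at hx ⊢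
  by_cases hkj : k = j
  · subst hkj
    have h1 : ‖a k - y‖ = (p:ℝ)^(-(n k)) := by
      rw [norm_sub_rev, ← dist_eq_norm]
      exact hk
    have h2 : ‖x - a k‖ ≠ ‖a k - y‖ := by
      rw [h1]; exact ne_of_lt (lt_of_le_of_lt hx (padic_inner_lt p k))
    have : x - y = (x - a k) + (a k - y) := by ring
    rw [this, Padic.add_eq_max_of_ne h2, h1]
    exact le_max_right _ _
  · by_contra hcon
    push_neg at hcon
    have hyj : y ∈ Metric.closedBall (a j) ((p:ℝ)^(-(n j))) := by
      rw [Metric.mem_closedBall, dist_eq_norm]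
      have : y - a j = (y - x) + (x - a j) := by ring
      rw [this]
      refine le_trans (Padic.nonarchimedean _ _) (max_le ?_
        (le_trans hx (padic_inner_lt p j).le))
      rw [norm_sub_rev]
      exact hcon.le
    have hyk : y ∈ Metric.closedBall (a k) ((p:ℝ)^(-(n k))) := by
      rw [Metric.mem_closedBall, hk]
    exact Set.disjoint_left.1 (hdisj hkj) hyk hyj

lemma padic_infDist_upper {j : ℕ} {x : ℚ_[p]}
    (hx : dist x (a j) ≤ (p:ℝ)^(-(n j + 1))) :
    Metric.infDist x (⋃ k, Metric.sphere (a k) ((p : ℝ) ^ (-n k))) ≤ (p:ℝ)^(-(n j)) := by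
  have hw : a j + (p:ℚ_[p])^(n j) ∈ ⋃ k, Metric.sphere (a k) ((p : ℝ) ^ (-n k)) :=
    Set.mem_iUnion.2 ⟨j, padic_sphere_witness p (a j) (n j)⟩
  refine le_trans (Metric.infDist_le_dist_of_mem hw) ?_
  rw [dist_eq_norm] at hx ⊢
  have h1 : x - (a j + (p:ℚ_[p])^(n j)) = (x - a j) + (-(p:ℚ_[p])^(n j)) := by ring
  rw [h1]
  refine le_trans (Padic.nonarchimedean _ _) (max_le
    (le_trans hx (padic_inner_lt p j).le) ?_)
  rw [norm_neg, Padic.norm_p_zpow]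

/-- x in the closed ball is either on the sphere or in the open ball -/
lemma padic_ball_dichotomy {j : ℕ} {x : ℚ_[p]}
    (hx : x ∈ Metric.closedBall (a j) ((p:ℝ)^(-(n j)))) :
    dist x (a j) = (p:ℝ)^(-(n j)) ∨ dist x (a j) ≤ (p:ℝ)^(-(n j + 1)) := by
  rw [Metric.mem_closedBall] at hx
  rcases eq_or_lt_of_le hx with h | h
  · exact Or.inl h
  · right
    rw [dist_eq_norm] at h ⊢
    rw [← show (-(n j) - 1 : ℤ) = -(n j + 1) by ring]
    exact (Padic.norm_lt_pow_iff_norm_le_pow_sub_one _ _).1 h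

lemma padic_N_eq
    (hdisj : Pairwise fun i j =>
      Disjoint (Metric.closedBall (a i) ((p : ℝ) ^ (-n i)))
        (Metric.closedBall (a j) ((p : ℝ) ^ (-n j))))
    {ε : ℝ} (hε : 0 < ε) :
    {x ∈ ⋃ j, Metric.closedBall (a j) ((p : ℝ) ^ (-n j)) |
        Metric.infDist x (⋃ j, Metric.sphere (a j) ((p : ℝ) ^ (-n j))) < ε}
      = (⋃ j, Metric.sphere (a j) ((p : ℝ) ^ (-n j)))
        ∪ ⋃ j ∈ {j | (p:ℝ)^(-(n j)) < ε}, Metric.closedBall (a j) ((p:ℝ)^(-(n j + 1))) := by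
  have hβne : (⋃ j, Metric.sphere (a j) ((p : ℝ) ^ (-n j))).Nonempty :=
    ⟨_, Set.mem_iUnion.2 ⟨0, padic_sphere_witness p (a 0) (n 0)⟩⟩
  ext x
  simp only [Set.mem_setOf_eq, Set.mem_union, Set.mem_iUnion, exists_prop]
  constructor
  · rintro ⟨hxU, hxd⟩
    obtain ⟨j, hxj⟩ := hxU
    rcases padic_ball_dichotomy p hxj with h | h
    · exact Or.inl ⟨j, h⟩
    · right
      refine ⟨j, ?_, Metric.mem_closedBall.2 h⟩
      obtain ⟨y, hy, hdy⟩ := (Metric.infDist_lt_iff hβne).1 hxd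
      exact lt_of_le_of_lt (padic_infDist_lower p hdisj h hy) hdy
  · rintro (⟨j, hj⟩ | ⟨j, hjε, hx⟩)
    · refine ⟨⟨j, Metric.sphere_subset_closedBall hj⟩, ?_⟩
      rw [Metric.infDist_zero_of_mem (Set.mem_iUnion.2 ⟨j, hj⟩)]
      exact hε
    · refine ⟨⟨j, Metric.closedBall_subset_closedBall
        (padic_inner_lt p j).le hx⟩, ?_⟩
      exact lt_of_le_of_lt (padic_infDist_upper p hx) hjε

lemma padic_N_measure
    (hdisj : Pairwise fun i j =>
      Disjoint (Metric.closedBall (a i) ((p : ℝ) ^ (-n i)))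
        (Metric.closedBall (a j) ((p : ℝ) ^ (-n j))))
    {ε : ℝ} (hε : 0 < ε) :
    padicHaar p {x ∈ ⋃ j, Metric.closedBall (a j) ((p : ℝ) ^ (-n j)) |
        Metric.infDist x (⋃ j, Metric.sphere (a j) ((p : ℝ) ^ (-n j))) < ε}
      = padicHaar p (⋃ j, Metric.sphere (a j) ((p : ℝ) ^ (-n j)))
        + ∑' j, Set.indicator {j | (p:ℝ)^(-(n j)) < ε}
            (fun j => (p:ℝ≥0∞)^(-(n j + 1))) j := by
  rw [padic_N_eq p hdisj hε]
  have hVmeas : MeasurableSet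
      (⋃ j ∈ {j | (p:ℝ)^(-(n j)) < ε}, Metric.closedBall (a j) ((p:ℝ)^(-(n j + 1)))) :=
    MeasurableSet.biUnion (Set.to_countable _) (fun j _ => measurableSet_closedBall)
  have hdisjBV : Disjoint (⋃ j, Metric.sphere (a j) ((p : ℝ) ^ (-n j)))
      (⋃ j ∈ {j | (p:ℝ)^(-(n j)) < ε}, Metric.closedBall (a j) ((p:ℝ)^(-(n j + 1)))) := by
    rw [Set.disjoint_iUnion_left]
    intro k
    rw [Set.disjoint_iUnion₂_right]
    intro j _
    by_cases hkj : k = j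
    · subst hkj
      rw [Set.disjoint_left]
      intro z hz hz'
      rw [Metric.mem_sphere] at hz
      rw [Metric.mem_closedBall, hz] at hz'
      exact absurd hz' (not_le.2 (padic_inner_lt p k))
    · exact (hdisj hkj).mono Metric.sphere_subset_closedBall
        (Metric.closedBall_subset_closedBall (padic_inner_lt p j).le)
  rw [measure_union hdisjBV hVmeas]
  congr 1
  rw [measure_biUnion (Set.to_countable _) ?pd (fun j _ => measurableSet_closedBall)]
  · rw [← tsum_subtype]
    congr 1
    ext j
    exact haar_ball p (a j) (n j + 1)
  case pd =>
    intro i hi j hj hij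
    exact (hdisj hij).mono
      (Metric.closedBall_subset_closedBall (padic_inner_lt p i).le)
      (Metric.closedBall_subset_closedBall (padic_inner_lt p j).le)

open Filter in
theorem padic_haar_metric_boundary' (a : ℕ → ℚ_[p]) (n : ℕ → ℤ)
    (hdisj : Pairwise fun i j =>
      Disjoint (Metric.closedBall (a i) ((p : ℝ) ^ (-n i)))
        (Metric.closedBall (a j) ((p : ℝ) ^ (-n j))))
    (hsum : Summable fun j => (p : ℝ) ^ (-n j)) :
    padicHaar p (⋃ j, Metric.sphere (a j) ((p : ℝ) ^ (-n j)))
        = ENNReal.ofReal ((1 - (p : ℝ)⁻¹) * ∑' j, (p : ℝ) ^ (-n j))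
      ∧ Tendsto
          (fun ε : ℝ => padicHaar p
            {x ∈ ⋃ j, Metric.closedBall (a j) ((p : ℝ) ^ (-n j)) |
              Metric.infDist x (⋃ j, Metric.sphere (a j) ((p : ℝ) ^ (-n j))) < ε})
          (nhdsWithin 0 (Set.Ioi 0))
          (nhds (ENNReal.ofReal ((1 - (p : ℝ)⁻¹) * ∑' j, (p : ℝ) ^ (-n j)))) := by
  have h1 := haar_beta p a n hdisj hsum
  refine ⟨h1, ?_⟩
  set h : ℕ → ℝ≥0∞ := fun j => (p:ℝ≥0∞)^(-(n j + 1)) with hh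
  set g : ℝ → ℝ≥0∞ := fun ε => ∑' j, Set.indicator {j | (p:ℝ)^(-(n j)) < ε} h j with hg
  have htot : (∑' j, h j) ≠ ⊤ := by
    have hle : ∀ j, h j ≤ ENNReal.ofReal ((p:ℝ)^(-(n j))) := by
      intro j
      show (p:ℝ≥0∞)^(-(n j + 1)) ≤ ENNReal.ofReal ((p:ℝ)^(-(n j)))
      rw [← ofReal_p_zpow p (-(n j + 1))]
      exact ENNReal.ofReal_le_ofReal (padic_inner_lt p j).le
    refine ne_top_of_le_ne_top ?_ (ENNReal.tsum_le_tsum hle)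
    rw [← ENNReal.ofReal_tsum_of_nonneg (fun j => by positivity) hsum]
    exact ENNReal.ofReal_ne_top
  have hg0 : Tendsto g (nhdsWithin 0 (Set.Ioi 0)) (nhds 0) := by
    rw [ENNReal.tendsto_nhds_zero]
    intro δ hδ
    obtain ⟨F, hF⟩ :=
      (ENNReal.tendsto_nhds_zero.1 (ENNReal.tendsto_tsum_compl_atTop_zero htot) δ hδ).exists
    obtain ⟨ε₀, hε₀pos, hε₀⟩ : ∃ ε₀ : ℝ, 0 < ε₀ ∧ ∀ j ∈ F, ε₀ ≤ (p:ℝ)^(-(n j)) := by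
      rcases F.eq_empty_or_nonempty with hFe | hFe
      · exact ⟨1, one_pos, by simp [hFe]⟩
      · refine ⟨F.inf' hFe (fun j => (p:ℝ)^(-(n j))), ?_, fun j hj => Finset.inf'_le _ hj⟩
        rw [Finset.lt_inf'_iff]
        intro j hj
        exact zpow_pos (by exact_mod_cast hp.1.pos) _
    filter_upwards [Ioc_mem_nhdsGT_of_mem ⟨le_refl (0:ℝ), hε₀pos⟩] with ε hεIoc
    have hsub : {j | (p:ℝ)^(-(n j)) < ε} ⊆ {j | j ∉ F} := by
      intro j hj hjF
      exact absurd (lt_of_lt_of_le hj hεIoc.2) (not_lt.2 (hε₀ j hjF))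
    calc g ε ≤ ∑' j, Set.indicator {j | j ∉ F} h j :=
          ENNReal.tsum_le_tsum
            (fun j => Set.indicator_le_indicator_of_subset hsub (fun _ => zero_le) j)
      _ = ∑' (j : {j | j ∉ F}), h j := (tsum_subtype _ _).symm
      _ ≤ δ := hF
  have hcong : ∀ᶠ ε in nhdsWithin (0:ℝ) (Set.Ioi 0),
      padicHaar p (⋃ j, Metric.sphere (a j) ((p : ℝ) ^ (-n j))) + g ε
        = padicHaar p {x ∈ ⋃ j, Metric.closedBall (a j) ((p : ℝ) ^ (-n j)) |
            Metric.infDist x (⋃ j, Metric.sphere (a j) ((p : ℝ) ^ (-n j))) < ε} := by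
    filter_upwards [self_mem_nhdsWithin] with ε hε
    exact (padic_N_measure p hdisj hε).symm
  rw [← h1]
  have hadd : Tendsto (fun ε : ℝ => padicHaar p
      (⋃ j, Metric.sphere (a j) ((p : ℝ) ^ (-n j))) + g ε)
      (nhdsWithin 0 (Set.Ioi 0))
      (nhds (padicHaar p (⋃ j, Metric.sphere (a j) ((p : ℝ) ^ (-n j))) + 0)) :=
    Tendsto.add tendsto_const_nhds hg0
  rw [add_zero] at hadd
  exact Tendsto.congr' hcong hadd


open Filter in
/-- For a p-adic fractal string given by pairwise disjoint closed balls
`B_j = B(a_j, p^{-n_j})` with summable lengths, the metric boundary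
`β = ⋃_j S(a_j, p^{-n_j})` has Haar measure `(1 - p⁻¹) · ∑_j p^{-n_j}`, and the measure
of the thick inner ε-neighborhood `N_ε` tends to `(1 - p⁻¹) · ∑_j p^{-n_j}` as `ε → 0⁺`. -/
theorem padic_haar_metric_boundary (p : ℕ) [Fact p.Prime]
    (a : ℕ → ℚ_[p]) (n : ℕ → ℤ)
    (hdisj : Pairwise fun i j =>
      Disjoint (Metric.closedBall (a i) ((p : ℝ) ^ (-n i)))
        (Metric.closedBall (a j) ((p : ℝ) ^ (-n j))))
    (hsum : Summable fun j => (p : ℝ) ^ (-n j)) :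
    padicHaar p (⋃ j, Metric.sphere (a j) ((p : ℝ) ^ (-n j)))
        = ENNReal.ofReal ((1 - (p : ℝ)⁻¹) * ∑' j, (p : ℝ) ^ (-n j))
      ∧ Tendsto
          (fun ε : ℝ => padicHaar p
            {x ∈ ⋃ j, Metric.closedBall (a j) ((p : ℝ) ^ (-n j)) |
              Metric.infDist x (⋃ j, Metric.sphere (a j) ((p : ℝ) ^ (-n j))) < ε})
          (nhdsWithin 0 (Set.Ioi 0))
          (nhds (ENNReal.ofReal ((1 - (p : ℝ)⁻¹) * ∑' j, (p : ℝ) ^ (-n j)))) :=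
  padic_haar_metric_boundary' p a n hdisj hsum
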